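/- Let f be holomorphic on the open upper half-plane ℂ₊ = {λ ∈ ℂ : Im λ > 0} with Im f(λ) ≥ 0 for all λ ∈ ℂ₊, and suppose that f(iη)/(iη) → 1 as η → +∞ (η real). Then Im f(λ) ≥ Im λ for every λ ∈ ℂ₊. -/

import Mathlib

open Complex Metric Filter

private lemma hg_normSq_conj_sub (w a : ℂ) :
    normSq (w - (starRingEnd ℂ) a) = normSq (w - a) + 4 * w.im * a.im := by
  simp [normSq_apply, Complex.sub_re, Complex.sub_im, Complex.conj_re, Complex.conj_im]
  ring

private lemma hg_sub_conj_ne (w a : ℂ) (hw : 0 < w.im) (ha : 0 < a.im) :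
    w - (starRingEnd ℂ) a ≠ 0 := by
  intro h
  have h2 := congrArg Complex.im h
  simp [Complex.sub_im, Complex.conj_im] at h2
  linarith

private lemma hg_abs_lt (w a : ℂ) (hw : 0 < w.im) (ha : 0 < a.im) :
    ‖w - a‖ < ‖w - (starRingEnd ℂ) a‖ := by
  have h : normSq (w - a) < normSq (w - (starRingEnd ℂ) a) := by
    rw [hg_normSq_conj_sub]; nlinarith
  nlinarith [Complex.normSq_eq_norm_sq (w - a), Complex.normSq_eq_norm_sq (w - (starRingEnd ℂ) a),
    norm_nonneg (w - a), norm_nonneg (w - (starRingEnd ℂ) a)]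

private lemma hg_coe_inv_tendsto : Tendsto (fun η : ℝ => ((η : ℂ))⁻¹) atTop (nhds 0) := by
  have h1 : Tendsto (fun η : ℝ => ((η⁻¹ : ℝ) : ℂ)) atTop (nhds ((0 : ℝ) : ℂ)) :=
    (Complex.continuous_ofReal.tendsto 0).comp tendsto_inv_atTop_zero
  simpa using h1

/-- Schwarz–Pick type inequality at the point `iη`. -/
private lemma hg_sp (f : ℂ → ℂ)
    (hf : DifferentiableOn ℂ f {z : ℂ | 0 < z.im})
    (him : ∀ z : ℂ, 0 < z.im → 0 < (f z).im)
    (z₀ : ℂ) (hz₀ : 0 < z₀.im) (η : ℝ) (hη : 0 < η) :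
    z₀.im * η * normSq (f z₀ - (starRingEnd ℂ) (f ((η : ℂ) * I))) ≤
      (f z₀).im * (f ((η : ℂ) * I)).im * normSq (z₀ + (η : ℂ) * I) := by
  set ie : ℂ := (η : ℂ) * I with hie
  have hieim : ie.im = η := by simp [hie]
  have hiepos : 0 < ie.im := by rw [hieim]; exact hη
  have hie0 : ie ≠ 0 := by
    intro h; rw [h] at hieim; simp at hieim; linarith
  set a : ℂ := f ie with ha'
  have ha : 0 < a.im := him ie hiepos
  set M : ℂ → ℂ := fun u => ie * (1 + u) / (1 - u) with hM
  have hMim : ∀ u ∈ ball (0 : ℂ) 1, 0 < (M u).im := by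
    intro u hu
    have hu1 : ‖u‖ < 1 := by simpa [mem_ball, Complex.dist_eq] using hu
    have hns : normSq u < 1 := by nlinarith [Complex.normSq_eq_norm_sq u, norm_nonneg u]
    have hne : (1 : ℂ) - u ≠ 0 := by
      intro h
      have : (1 : ℂ) = u := by linear_combination h
      rw [← this] at hu1; simp at hu1
    have him' : (M u).im = η * (1 - (u.re ^ 2 + u.im ^ 2)) / normSq (1 - u) := by
      rw [hM]
      simp only [hie, Complex.div_im, Complex.mul_re, Complex.mul_im, Complex.add_re,
        Complex.add_im, Complex.sub_re, Complex.sub_im, Complex.one_re, Complex.one_im,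
        Complex.I_re, Complex.I_im, Complex.ofReal_re, Complex.ofReal_im, normSq_apply]
      ring
    rw [him']
    apply div_pos
    · have : u.re ^ 2 + u.im ^ 2 = normSq u := by rw [normSq_apply]; ring
      rw [this]; nlinarith
    · exact normSq_pos.mpr hne
  have hball_ne : ∀ u ∈ ball (0 : ℂ) 1, (1 : ℂ) - u ≠ 0 := by
    intro u hu h
    have hu1 : ‖u‖ < 1 := by simpa [mem_ball, Complex.dist_eq] using hu
    have : (1 : ℂ) = u := by linear_combination h
    rw [← this] at hu1; simp at hu1
  have hMdiff : DifferentiableOn ℂ M (ball 0 1) := by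
    apply DifferentiableOn.div
    · exact (differentiable_const ie).differentiableOn.mul
        ((differentiable_const (1 : ℂ)).add differentiable_id).differentiableOn
    · exact ((differentiable_const (1 : ℂ)).sub differentiable_id).differentiableOn
    · exact hball_ne
  have hfMdiff : DifferentiableOn ℂ (fun u => f (M u)) (ball 0 1) :=
    hf.comp hMdiff (fun u hu => hMim u hu)
  set g : ℂ → ℂ := fun u => (f (M u) - a) / (f (M u) - (starRingEnd ℂ) a) with hg
  have hgden : ∀ u ∈ ball (0 : ℂ) 1, f (M u) - (starRingEnd ℂ) a ≠ 0 := by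
    intro u hu
    exact hg_sub_conj_ne _ _ (him _ (hMim u hu)) ha
  have hgd : DifferentiableOn ℂ g (ball 0 1) := by
    apply DifferentiableOn.div
    · exact hfMdiff.sub (differentiable_const a).differentiableOn
    · exact hfMdiff.sub (differentiable_const _).differentiableOn
    · exact hgden
  have hgmaps : Set.MapsTo g (ball 0 1) (ball 0 1) := by
    intro u hu
    rw [mem_ball, dist_zero_right, hg]
    simp only [norm_div]
    rw [div_lt_one (norm_pos_iff.mpr (hgden u hu))]
    exact hg_abs_lt _ _ (him _ (hMim u hu)) ha
  have hM0 : M 0 = ie := by rw [hM]; simp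
  have hg0 : g 0 = 0 := by rw [hg]; simp [hM0, ← ha']
  set u₀ : ℂ := (z₀ - ie) / (z₀ + ie) with hu₀
  have hden0 : z₀ + ie ≠ 0 := by
    intro h
    have h2 := congrArg Complex.im h
    simp [Complex.add_im, hieim] at h2
    linarith [h2, hieim]
  have hconj_ie : (starRingEnd ℂ) ie = -ie := by
    rw [hie]; simp [Complex.conj_I]
  have habs_lt : ‖z₀ - ie‖ < ‖z₀ + ie‖ := by
    have h := hg_abs_lt z₀ ie hz₀ hiepos
    rwa [hconj_ie, sub_neg_eq_add] at h
  have hu₀lt : ‖u₀‖ < 1 := by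
    rw [hu₀, norm_div, div_lt_one (norm_pos_iff.mpr hden0)]
    exact habs_lt
  have h1u₀ : (1 : ℂ) - u₀ = 2 * ie / (z₀ + ie) := by
    rw [hu₀]; field_simp; ring
  have h1u₀' : (1 : ℂ) + u₀ = 2 * z₀ / (z₀ + ie) := by
    rw [hu₀]; field_simp; ring
  have hMu₀ : M u₀ = z₀ := by
    rw [hM]
    show ie * (1 + u₀) / (1 - u₀) = z₀
    rw [h1u₀, h1u₀']
    field_simp
  have hsch := Complex.norm_le_norm_of_mapsTo_ball hgd (hgmaps.mono_right ball_subset_closedBall) hg0 hu₀lt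
  rw [hg] at hsch
  simp only [hMu₀] at hsch
  rw [hu₀, norm_div, norm_div] at hsch
  have hd1 : 0 < ‖f z₀ - (starRingEnd ℂ) a‖ :=
    norm_pos_iff.mpr (hg_sub_conj_ne _ _ (him _ hz₀) ha)
  have hd2 : 0 < ‖z₀ + ie‖ := norm_pos_iff.mpr hden0
  have hsch' : ‖f z₀ - a‖ * ‖z₀ + ie‖ ≤
      ‖z₀ - ie‖ * ‖f z₀ - (starRingEnd ℂ) a‖ :=
    (div_le_div_iff₀ hd1 hd2).mp hsch
  have hAQ : normSq (f z₀ - a) * normSq (z₀ + ie) ≤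
      normSq (z₀ - ie) * normSq (f z₀ - (starRingEnd ℂ) a) := by
    have hmm := mul_le_mul hsch' hsch' (by positivity) (by positivity)
    calc normSq (f z₀ - a) * normSq (z₀ + ie)
        = (‖f z₀ - a‖ * ‖z₀ + ie‖) *
            (‖f z₀ - a‖ * ‖z₀ + ie‖) := by
          rw [Complex.normSq_eq_norm_sq, Complex.normSq_eq_norm_sq]; ring
      _ ≤ (‖z₀ - ie‖ * ‖f z₀ - (starRingEnd ℂ) a‖) *
            (‖z₀ - ie‖ * ‖f z₀ - (starRingEnd ℂ) a‖) := hmm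
      _ = normSq (z₀ - ie) * normSq (f z₀ - (starRingEnd ℂ) a) := by
          rw [Complex.normSq_eq_norm_sq, Complex.normSq_eq_norm_sq]; ring
  have hBid : normSq (f z₀ - (starRingEnd ℂ) a) = normSq (f z₀ - a) + 4 * (f z₀).im * a.im :=
    hg_normSq_conj_sub _ _
  have hQid : normSq (z₀ + ie) = normSq (z₀ - ie) + 4 * z₀.im * η := by
    have h := hg_normSq_conj_sub z₀ ie
    rw [hconj_ie, sub_neg_eq_add, hieim] at h
    exact h
  have key : (f z₀).im * a.im * normSq (z₀ + ie) - z₀.im * η * normSq (f z₀ - (starRingEnd ℂ) a)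
      = (normSq (z₀ - ie) * normSq (f z₀ - (starRingEnd ℂ) a)
          - normSq (f z₀ - a) * normSq (z₀ + ie)) / 4 := by
    rw [hBid, hQid]; ring
  have hgoal : z₀.im * η * normSq (f z₀ - (starRingEnd ℂ) a) ≤
      (f z₀).im * a.im * normSq (z₀ + ie) := by linarith
  exact hgoal

private lemma hg_main (f : ℂ → ℂ)
    (hf : DifferentiableOn ℂ f {z : ℂ | 0 < z.im})
    (him : ∀ z : ℂ, 0 < z.im → 0 < (f z).im)
    (hlim : Tendsto (fun η : ℝ => f ((η : ℂ) * I) / ((η : ℂ) * I)) atTop (nhds 1)) :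
    ∀ z : ℂ, 0 < z.im → z.im ≤ (f z).im := by
  intro z₀ hz₀
  set c : ℝ → ℂ := fun η => f ((η : ℂ) * I) / ((η : ℂ) * I) with hc
  have hconj : Tendsto (fun η : ℝ => (starRingEnd ℂ) (c η)) atTop (nhds 1) := by
    have h := (Complex.continuous_conj.tendsto 1).comp hlim
    simpa [Function.comp_def] using h
  have hcre : Tendsto (fun η : ℝ => (c η).re) atTop (nhds 1) := by
    have h := (Complex.continuous_re.tendsto 1).comp hlim
    simpa [Function.comp_def] using h
  have hnum : Tendsto (fun η : ℝ =>
      z₀.im * normSq (f z₀ * ((η : ℂ))⁻¹ + I * (starRingEnd ℂ) (c η))) atTop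
      (nhds (z₀.im * 1)) := by
    have h1 : Tendsto (fun η : ℝ => f z₀ * ((η : ℂ))⁻¹ + I * (starRingEnd ℂ) (c η)) atTop
        (nhds (f z₀ * 0 + I * 1)) :=
      (tendsto_const_nhds.mul hg_coe_inv_tendsto).add (tendsto_const_nhds.mul hconj)
    have h2 := (Complex.continuous_normSq.tendsto _).comp h1
    have h3 : normSq (f z₀ * 0 + I * 1) = 1 := by simp
    rw [h3] at h2
    exact tendsto_const_nhds.mul h2
  have hden : Tendsto (fun η : ℝ => (c η).re * normSq (z₀ * ((η : ℂ))⁻¹ + I)) atTop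
      (nhds (1 * 1)) := by
    have h1 : Tendsto (fun η : ℝ => z₀ * ((η : ℂ))⁻¹ + I) atTop (nhds (z₀ * 0 + I)) :=
      (tendsto_const_nhds.mul hg_coe_inv_tendsto).add tendsto_const_nhds
    have h2 := (Complex.continuous_normSq.tendsto _).comp h1
    have h3 : normSq (z₀ * 0 + I) = 1 := by simp
    rw [h3] at h2
    exact hcre.mul h2
  have hrt : Tendsto (fun η : ℝ =>
      z₀.im * normSq (f z₀ * ((η : ℂ))⁻¹ + I * (starRingEnd ℂ) (c η)) /
        ((c η).re * normSq (z₀ * ((η : ℂ))⁻¹ + I))) atTop (nhds (z₀.im * 1 / (1 * 1))) :=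
    hnum.div hden (by norm_num)
  have hub : ∀ᶠ η : ℝ in atTop,
      z₀.im * normSq (f z₀ * ((η : ℂ))⁻¹ + I * (starRingEnd ℂ) (c η)) /
        ((c η).re * normSq (z₀ * ((η : ℂ))⁻¹ + I)) ≤ (f z₀).im := by
    filter_upwards [eventually_gt_atTop (0 : ℝ)] with η hη
    have hη0 : (η : ℂ) ≠ 0 := by exact_mod_cast hη.ne'
    have hI0 : (η : ℂ) * I ≠ 0 := mul_ne_zero hη0 I_ne_zero
    have hiepos : (0 : ℝ) < ((η : ℂ) * I).im := by simpa using hη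
    have hfη : f ((η : ℂ) * I) = (η : ℂ) * I * c η := by
      rw [hc]; field_simp
    have hG : 0 < (f ((η : ℂ) * I)).im := him _ hiepos
    have hGc : (f ((η : ℂ) * I)).im = η * (c η).re := by
      rw [hfη]
      simp [Complex.mul_im, Complex.mul_re]
    have hcrepos : 0 < (c η).re := by nlinarith [hG, hGc]
    have hBid : f z₀ - (starRingEnd ℂ) (f ((η : ℂ) * I)) =
        (η : ℂ) * (f z₀ * ((η : ℂ))⁻¹ + I * (starRingEnd ℂ) (c η)) := by
      rw [hfη, map_mul, map_mul, Complex.conj_ofReal, Complex.conj_I]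
      field_simp
      ring
    have hQid : z₀ + (η : ℂ) * I = (η : ℂ) * (z₀ * ((η : ℂ))⁻¹ + I) := by
      field_simp
    have hsp := hg_sp f hf him z₀ hz₀ η hη
    rw [hBid, hQid, Complex.normSq_mul, Complex.normSq_mul, hGc] at hsp
    have hnsq : normSq ((η : ℂ)) = η * η := Complex.normSq_ofReal η
    rw [hnsq] at hsp
    have hne : z₀ + (η : ℂ) * I ≠ 0 := by
      intro h
      have h2 := congrArg Complex.im h
      simp at h2
      linarith
    have hN2pos : 0 < normSq (z₀ * ((η : ℂ))⁻¹ + I) := by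
      rw [normSq_pos]
      intro h
      apply hne
      rw [hQid, h, mul_zero]
    have hdenpos : 0 < (c η).re * normSq (z₀ * ((η : ℂ))⁻¹ + I) := mul_pos hcrepos hN2pos
    rw [div_le_iff₀ hdenpos]
    have h3 : (0 : ℝ) < η * η * η := by positivity
    have hsp' : (η * η * η) * (z₀.im * normSq (f z₀ * ((η : ℂ))⁻¹ + I * (starRingEnd ℂ) (c η)))
        ≤ (η * η * η) * ((f z₀).im * ((c η).re * normSq (z₀ * ((η : ℂ))⁻¹ + I))) := by
      nlinarith [hsp]
    exact le_of_mul_le_mul_left hsp' h3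
  have hle := le_of_tendsto hrt hub
  have : z₀.im * 1 / (1 * 1) = z₀.im := by ring
  linarith [hle, this.symm.le]

theorem stmt_10 (f : ℂ → ℂ)
    (hf : DifferentiableOn ℂ f {z : ℂ | 0 < z.im})
    (him : ∀ z : ℂ, 0 < z.im → 0 ≤ (f z).im)
    (hlim : Filter.Tendsto (fun η : ℝ => f ((η : ℂ) * Complex.I) / ((η : ℂ) * Complex.I))
      Filter.atTop (nhds 1)) :
    ∀ z : ℂ, 0 < z.im → z.im ≤ (f z).im := by
  intro z hz
  have key : ∀ ε : ℝ, 0 < ε → z.im ≤ (f z).im + ε := by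
    intro ε hε
    have hf' : DifferentiableOn ℂ (fun w => f w + (ε : ℂ) * I) {z : ℂ | 0 < z.im} :=
      hf.add_const _
    have him' : ∀ w : ℂ, 0 < w.im → 0 < ((fun w => f w + (ε : ℂ) * I) w).im := by
      intro w hw
      have h1 : ((f w + (ε : ℂ) * I)).im = (f w).im + ε := by simp
      simp only [h1]
      linarith [him w hw]
    have hlim' : Tendsto (fun η : ℝ =>
        (fun w => f w + (ε : ℂ) * I) ((η : ℂ) * I) / ((η : ℂ) * I)) atTop (nhds 1) := by
      have h0 : Tendsto (fun η : ℝ => (ε : ℂ) * I / ((η : ℂ) * I)) atTop (nhds 0) := by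
        have hcg : ∀ᶠ η : ℝ in atTop, (ε : ℂ) * I / ((η : ℂ) * I) = (ε : ℂ) * ((η : ℂ))⁻¹ := by
          filter_upwards [eventually_gt_atTop (0 : ℝ)] with η hη
          have hη0 : (η : ℂ) ≠ 0 := by exact_mod_cast hη.ne'
          field_simp
        rw [tendsto_congr' hcg]
        simpa using tendsto_const_nhds.mul hg_coe_inv_tendsto
      have h := hlim.add h0
      simp only [add_zero] at h
      refine h.congr (fun η => ?_)
      simp only [add_div]
    have h := hg_main _ hf' him' hlim' z hz
    simpa using h
  linarith [le_of_forall_pos_le_add key]
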